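/- (Lemma 2) For every fixed d with 0 < d < L, there exists a unique θ° in the closed interval [0, arccos(d/L)] satisfying ξ_L·L·sin θ° + (180·b/π)·(1 − p_b(d, θ°))·G(θ°)/(L − d·cos θ°) = 0, where G(θ) = (L² + d²)·cos θ − d·L·(1 + cos² θ), and this θ° is the unique global maximizer of the function θ ↦ f(d, θ) over θ ∈ [0, π/2]. -/

import Mathlib

/-- Distance from the UAV (at polar coordinates `(d, θ)` relative to Willie) to Bob. -/
noncomputable def db (L d θ : ℝ) : ℝ :=
  Real.sqrt (L ^ 2 + d ^ 2 - 2 * d * L * Real.cos θ)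

/-- Elevation angle from Bob to the UAV (in radians). -/
noncomputable def θb (L d θ : ℝ) : ℝ :=
  Real.arcsin (d * Real.sin θ / db L d θ)

/-- Probability of a LoS component in the UAV-to-Bob channel. -/
noncomputable def pb (a b L d θ : ℝ) : ℝ :=
  1 / (1 + a * Real.exp (-b * ((180 / Real.pi) * θb L d θ - a)))

/-- The objective `f(d, θ) = d_b^{ξ_L} · p_b`. -/
noncomputable def f (a b L ξL d θ : ℝ) : ℝ :=
  db L d θ ^ ξL * pb a b L d θ

/-- The function `G(θ) = (L² + d²)·cos θ − d·L·(1 + cos² θ)`. -/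
noncomputable def Gfun (L d θ : ℝ) : ℝ :=
  (L ^ 2 + d ^ 2) * Real.cos θ - d * L * (1 + Real.cos θ ^ 2)

/-- The simplified stationarity function. -/
noncomputable def Hfun (a b L ξL d θ : ℝ) : ℝ :=
  ξL * L * Real.sin θ + (180 * b / Real.pi) * (1 - pb a b L d θ) * (L * Real.cos θ - d)

lemma q_pos {L d : ℝ} (hL : 0 < L) (hd : 0 < d) (hdL : d < L) (θ : ℝ) :
    0 < L ^ 2 + d ^ 2 - 2 * d * L * Real.cos θ := by
  have h1 : 2 * d * L * Real.cos θ ≤ 2 * d * L := by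
    have := mul_pos hd hL
    nlinarith [Real.cos_le_one θ]
  nlinarith [sq_nonneg (L - d)]

lemma db_pos {L d : ℝ} (hL : 0 < L) (hd : 0 < d) (hdL : d < L) (θ : ℝ) : 0 < db L d θ :=
  Real.sqrt_pos.mpr (q_pos hL hd hdL θ)

lemma db_sq {L d : ℝ} (hL : 0 < L) (hd : 0 < d) (hdL : d < L) (θ : ℝ) :
    db L d θ ^ 2 = L ^ 2 + d ^ 2 - 2 * d * L * Real.cos θ :=
  Real.sq_sqrt (q_pos hL hd hdL θ).le

lemma Ldc_pos {L d : ℝ} (hd : 0 < d) (hdL : d < L) (θ : ℝ) : 0 < L - d * Real.cos θ := by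
  nlinarith [Real.cos_le_one θ]

lemma Gfact (L d θ : ℝ) : Gfun L d θ = (L - d * Real.cos θ) * (L * Real.cos θ - d) := by
  unfold Gfun; ring

lemma s_sq_lt {L d : ℝ} (hL : 0 < L) (hd : 0 < d) (hdL : d < L) (θ : ℝ) :
    (d * Real.sin θ / db L d θ) ^ 2 < 1 := by
  have h1 := db_pos hL hd hdL θ
  have h2 := db_sq hL hd hdL θ
  have h3 := Ldc_pos hd hdL θ
  rw [div_pow, div_lt_one (by positivity)]
  have hs : Real.sin θ ^ 2 = 1 - Real.cos θ ^ 2 := Real.sin_sq θ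
  nlinarith [sq_nonneg (L - d * Real.cos θ)]

lemma s_abs_lt {L d : ℝ} (hL : 0 < L) (hd : 0 < d) (hdL : d < L) (θ : ℝ) :
    |d * Real.sin θ / db L d θ| < 1 := by
  have := s_sq_lt hL hd hdL θ
  nlinarith [abs_nonneg (d * Real.sin θ / db L d θ), sq_abs (d * Real.sin θ / db L d θ)]

lemma hasDerivAt_db {L d : ℝ} (hL : 0 < L) (hd : 0 < d) (hdL : d < L) (θ : ℝ) :
    HasDerivAt (db L d) (d * L * Real.sin θ / db L d θ) θ := by
  have hq : HasDerivAt (fun θ => L ^ 2 + d ^ 2 - 2 * d * L * Real.cos θ)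
      (2 * d * L * Real.sin θ) θ := by
    simpa using (((Real.hasDerivAt_cos θ).const_mul (2 * d * L)).const_sub (L ^ 2 + d ^ 2))
  have h := hq.sqrt (ne_of_gt (q_pos hL hd hdL θ))
  have hdb := db_pos hL hd hdL θ
  have : (2 * d * L * Real.sin θ) / (2 * Real.sqrt (L ^ 2 + d ^ 2 - 2 * d * L * Real.cos θ))
      = d * L * Real.sin θ / db L d θ := by
    show _ = d * L * Real.sin θ / Real.sqrt (L ^ 2 + d ^ 2 - 2 * d * L * Real.cos θ)
    rw [← db]
    field_simp
  rw [this] at h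
  exact h

lemma hasDerivAt_s {L d : ℝ} (hL : 0 < L) (hd : 0 < d) (hdL : d < L) (θ : ℝ) :
    HasDerivAt (fun θ => d * Real.sin θ / db L d θ)
      (d * Gfun L d θ / db L d θ ^ 3) θ := by
  have hnum : HasDerivAt (fun θ => d * Real.sin θ) (d * Real.cos θ) θ := by
    simpa using (Real.hasDerivAt_sin θ).const_mul d
  have h := hnum.div (hasDerivAt_db hL hd hdL θ) (ne_of_gt (db_pos hL hd hdL θ))
  refine HasDerivAt.congr_deriv h ?_
  symm
  have hdb := db_pos hL hd hdL θ
  have hsq := db_sq hL hd hdL θ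
  have hsin : Real.sin θ ^ 2 = 1 - Real.cos θ ^ 2 := Real.sin_sq θ
  rw [Gfact]
  field_simp
  linear_combination (-(Real.cos θ)) * hsq + (d * L) * hsin

lemma sqrt_one_sub_s_sq {L d : ℝ} (hL : 0 < L) (hd : 0 < d) (hdL : d < L) (θ : ℝ) :
    Real.sqrt (1 - (d * Real.sin θ / db L d θ) ^ 2) = (L - d * Real.cos θ) / db L d θ := by
  have hdb := db_pos hL hd hdL θ
  have hsq := db_sq hL hd hdL θ
  have hldc := Ldc_pos hd hdL θ
  have key : 1 - (d * Real.sin θ / db L d θ) ^ 2 = ((L - d * Real.cos θ) / db L d θ) ^ 2 := by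
    have hsin : Real.sin θ ^ 2 = 1 - Real.cos θ ^ 2 := Real.sin_sq θ
    field_simp
    nlinarith [hsq, hsin]
  rw [key, Real.sqrt_sq (by positivity)]

lemma hasDerivAt_θb {L d : ℝ} (hL : 0 < L) (hd : 0 < d) (hdL : d < L) (θ : ℝ) :
    HasDerivAt (θb L d) (d * Gfun L d θ / (db L d θ ^ 2 * (L - d * Real.cos θ))) θ := by
  have habs := s_abs_lt hL hd hdL θ
  have h1 : d * Real.sin θ / db L d θ ≠ -1 := by
    intro h; rw [h] at habs; simp at habs
  have h2 : d * Real.sin θ / db L d θ ≠ 1 := by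
    intro h; rw [h] at habs; simp at habs
  have harc := Real.hasDerivAt_arcsin h1 h2
  have h := harc.comp θ (hasDerivAt_s hL hd hdL θ)
  have h' : HasDerivAt (θb L d)
      (1 / Real.sqrt (1 - (d * Real.sin θ / db L d θ) ^ 2) * (d * Gfun L d θ / db L d θ ^ 3)) θ := h
  rw [sqrt_one_sub_s_sq hL hd hdL θ] at h'
  convert h' using 1
  have hdb := db_pos hL hd hdL θ
  have hldc := Ldc_pos hd hdL θ
  field_simp

lemma pb_pos {a b L d : ℝ} (ha : 0 < a) (θ : ℝ) : 0 < pb a b L d θ := by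
  unfold pb
  have := Real.exp_pos (-b * ((180 / Real.pi) * θb L d θ - a))
  positivity

lemma pb_lt_one {a b L d : ℝ} (ha : 0 < a) (θ : ℝ) : pb a b L d θ < 1 := by
  unfold pb
  have h := Real.exp_pos (-b * ((180 / Real.pi) * θb L d θ - a))
  rw [div_lt_one (by positivity)]
  nlinarith

lemma hasDerivAt_pb {a b L d : ℝ} (ha : 0 < a) (hL : 0 < L) (hd : 0 < d) (hdL : d < L) (θ : ℝ) :
    HasDerivAt (pb a b L d)
      ((180 / Real.pi) * b * pb a b L d θ * (1 - pb a b L d θ) *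
        (d * Gfun L d θ / (db L d θ ^ 2 * (L - d * Real.cos θ)))) θ := by
  have hθb := hasDerivAt_θb hL hd hdL θ
  set T := d * Gfun L d θ / (db L d θ ^ 2 * (L - d * Real.cos θ)) with hT
  have hu : HasDerivAt (fun θ => -b * ((180 / Real.pi) * θb L d θ - a))
      (-b * ((180 / Real.pi) * T)) θ := by
    exact (((hθb.const_mul (180 / Real.pi)).sub_const a).const_mul (-b))
  have hE : HasDerivAt (fun θ => 1 + a * Real.exp (-b * ((180 / Real.pi) * θb L d θ - a)))
      (a * (Real.exp (-b * ((180 / Real.pi) * θb L d θ - a)) * (-b * ((180 / Real.pi) * T)))) θ :=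
    (hu.exp.const_mul a).const_add 1
  have hEpos := Real.exp_pos (-b * ((180 / Real.pi) * θb L d θ - a))
  have hDpos : 0 < 1 + a * Real.exp (-b * ((180 / Real.pi) * θb L d θ - a)) := by positivity
  have h := (hasDerivAt_const θ (1:ℝ)).div hE (ne_of_gt hDpos)
  have heq : pb a b L d = fun θ => 1 / (1 + a * Real.exp (-b * ((180 / Real.pi) * θb L d θ - a))) := rfl
  rw [heq]
  refine HasDerivAt.congr_deriv h ?_
  symm
  show (180 / Real.pi) * b * pb a b L d θ * (1 - pb a b L d θ) * T = _
  set E := Real.exp (-b * ((180 / Real.pi) * θb L d θ - a)) with hE'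
  have hpb : pb a b L d θ = 1 / (1 + a * E) := rfl
  rw [hpb]
  have hne : (1 + a * E) ≠ 0 := ne_of_gt hDpos
  field_simp
  ring

lemma hasDerivAt_f {a b L ξL d : ℝ} (ha : 0 < a) (hL : 0 < L) (hd : 0 < d) (hdL : d < L) (θ : ℝ) :
    HasDerivAt (f a b L ξL d)
      (f a b L ξL d θ * (d / db L d θ ^ 2) * Hfun a b L ξL d θ) θ := by
  have hdb := db_pos hL hd hdL θ
  have hldc := Ldc_pos hd hdL θ
  have hr : HasDerivAt (fun θ => db L d θ ^ ξL)
      ((d * L * Real.sin θ / db L d θ) * ξL * db L d θ ^ (ξL - 1)) θ :=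
    (hasDerivAt_db hL hd hdL θ).rpow_const (Or.inl (ne_of_gt hdb))
  have h := hr.mul (hasDerivAt_pb (b := b) ha hL hd hdL θ)
  have heq : f a b L ξL d = fun θ => db L d θ ^ ξL * pb a b L d θ := rfl
  rw [heq]
  refine HasDerivAt.congr_deriv h ?_
  symm
  unfold Hfun
  beta_reduce
  have hsub : db L d θ ^ (ξL - 1) = db L d θ ^ ξL / db L d θ := by
    rw [Real.rpow_sub hdb, Real.rpow_one]
  rw [hsub, Gfact]
  have hpb := pb_pos (b := b) (L := L) (d := d) ha θ
  have hπ := Real.pi_pos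
  field_simp

lemma continuous_pb {a b L d : ℝ} (ha : 0 < a) (hL : 0 < L) (hd : 0 < d) (hdL : d < L) :
    Continuous (pb a b L d) :=
  continuous_iff_continuousAt.mpr fun θ => (hasDerivAt_pb (b := b) ha hL hd hdL θ).continuousAt

lemma continuous_f {a b L ξL d : ℝ} (ha : 0 < a) (hL : 0 < L) (hd : 0 < d) (hdL : d < L) :
    Continuous (f a b L ξL d) :=
  continuous_iff_continuousAt.mpr fun θ => (hasDerivAt_f (b := b) ha hL hd hdL θ).continuousAt

lemma continuous_Hfun {a b L ξL d : ℝ} (ha : 0 < a) (hL : 0 < L) (hd : 0 < d) (hdL : d < L) :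
    Continuous (Hfun a b L ξL d) := by
  unfold Hfun
  have := continuous_pb (b := b) ha hL hd hdL
  fun_prop


set_option maxHeartbeats 1000000 in
/-- Lemma 2: for fixed `0 < d < L`, there is a unique `θ°` in `[0, arccos(d/L)]` solving
`ξ_L·L·sin θ° + (180·b/π)·(1 − p_b(d, θ°))·G(θ°)/(L − d·cos θ°) = 0`,
and this `θ°` is the unique global maximizer of `θ ↦ f(d, θ)` over `[0, π/2]`. -/
theorem stmt_10 (a b L ξL d : ℝ) (ha : 0 < a) (hb : 0 < b) (hL : 0 < L)
    (hξ : ξL < 0) (hd : 0 < d) (hdL : d < L) :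
    ∃ θ0 : ℝ, θ0 ∈ Set.Icc 0 (Real.arccos (d / L)) ∧
      ξL * L * Real.sin θ0 +
        (180 * b / Real.pi) * (1 - pb a b L d θ0) * Gfun L d θ0 / (L - d * Real.cos θ0) = 0 ∧
      (∀ θ ∈ Set.Icc 0 (Real.arccos (d / L)),
        ξL * L * Real.sin θ +
          (180 * b / Real.pi) * (1 - pb a b L d θ) * Gfun L d θ / (L - d * Real.cos θ) = 0 →
        θ = θ0) ∧
      (∀ θ ∈ Set.Icc 0 (Real.pi / 2), θ ≠ θ0 → f a b L ξL d θ < f a b L ξL d θ0) := by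
  have hπ := Real.pi_pos
  set θ1 := Real.arccos (d / L) with hθ1
  have hdL0 : 0 < d / L := div_pos hd hL
  have hdL1 : d / L < 1 := (div_lt_one hL).mpr hdL
  have hcθ1 : Real.cos θ1 = d / L := Real.cos_arccos (by linarith) (by linarith)
  have hθ1pos : 0 < θ1 := Real.arccos_pos.mpr hdL1
  have hθ1le : θ1 ≤ Real.pi / 2 := Real.arccos_le_pi_div_two.mpr hdL0.le
  -- the statement expression equals Hfun
  have hEH : ∀ θ : ℝ, ξL * L * Real.sin θ +
      (180 * b / Real.pi) * (1 - pb a b L d θ) * Gfun L d θ / (L - d * Real.cos θ)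
      = Hfun a b L ξL d θ := by
    intro θ
    have hldc := Ldc_pos hd hdL θ
    unfold Hfun
    rw [Gfact]
    field_simp
  -- pb is monotone on [0, θ1]
  have hpbmono : MonotoneOn (pb a b L d) (Set.Icc 0 θ1) := by
    apply monotoneOn_of_deriv_nonneg (convex_Icc _ _)
      (continuous_pb (b := b) ha hL hd hdL).continuousOn
      (fun x _ => ((hasDerivAt_pb (b := b) ha hL hd hdL x).differentiableAt).differentiableWithinAt)
    intro x hx
    rw [interior_Icc] at hx
    rw [(hasDerivAt_pb (b := b) ha hL hd hdL x).deriv]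
    have hxpi : x ∈ Set.Icc 0 Real.pi := ⟨hx.1.le, by linarith [hx.2]⟩
    have hcx : Real.cos x > d / L := by
      rw [← hcθ1]
      exact Real.strictAntiOn_cos hxpi ⟨Real.arccos_nonneg _, Real.arccos_le_pi _⟩ hx.2
    have hG : 0 ≤ Gfun L d x := by
      rw [Gfact]
      have h1 := Ldc_pos hd hdL x
      have h2 : 0 ≤ L * Real.cos x - d := by
        rw [gt_iff_lt, div_lt_iff₀ hL] at hcx
        nlinarith
      positivity
    have hpb1 := pb_pos (b := b) (L := L) (d := d) ha x
    have hpb2 := pb_lt_one (b := b) (L := L) (d := d) ha x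
    have hdb := db_pos hL hd hdL x
    have hldc := Ldc_pos hd hdL x
    have : (0:ℝ) ≤ 1 - pb a b L d x := by linarith
    positivity
  -- Hfun is strictly antitone on [0, θ1]
  have hHanti : StrictAntiOn (Hfun a b L ξL d) (Set.Icc 0 θ1) := by
    intro x hx y hy hxy
    unfold Hfun
    have hsin : Real.sin x < Real.sin y := by
      apply Real.strictMonoOn_sin ⟨by linarith [hx.1], by linarith [hx.2]⟩
        ⟨by linarith [hy.1], by linarith [hy.2]⟩ hxy
    have hξL : ξL * L < 0 := mul_neg_of_neg_of_pos hξ hL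
    have hA : ξL * L * Real.sin y < ξL * L * Real.sin x := by nlinarith
    have hpbm : pb a b L d x ≤ pb a b L d y := hpbmono hx hy hxy.le
    have hcos : Real.cos y < Real.cos x := by
      apply Real.strictAntiOn_cos ⟨hx.1, by linarith [hx.2]⟩ ⟨hy.1, by linarith [hy.2]⟩ hxy
    have hvy : 0 ≤ L * Real.cos y - d := by
      have : d / L ≤ Real.cos y := by
        rw [← hcθ1]
        rcases eq_or_lt_of_le hy.2 with h | h
        · rw [h]
        · exact (Real.strictAntiOn_cos ⟨hy.1, by linarith [hy.2]⟩
            ⟨Real.arccos_nonneg _, Real.arccos_le_pi _⟩ h).le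
      rw [div_le_iff₀ hL] at this
      nlinarith
    have hu : (0:ℝ) < 1 - pb a b L d y := by linarith [pb_lt_one (b := b) (L := L) (d := d) ha y]
    have hux : (0:ℝ) < 1 - pb a b L d x := by linarith [pb_lt_one (b := b) (L := L) (d := d) ha x]
    have hB : (1 - pb a b L d y) * (L * Real.cos y - d) ≤
        (1 - pb a b L d x) * (L * Real.cos x - d) := by
      calc (1 - pb a b L d y) * (L * Real.cos y - d)
          ≤ (1 - pb a b L d x) * (L * Real.cos y - d) :=
            mul_le_mul_of_nonneg_right (by linarith) hvy
        _ ≤ (1 - pb a b L d x) * (L * Real.cos x - d) :=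
            mul_le_mul_of_nonneg_left (by nlinarith) hux.le
    have hCpos : 0 < 180 * b / Real.pi := by positivity
    nlinarith
  -- endpoint signs
  have hH0 : 0 < Hfun a b L ξL d 0 := by
    unfold Hfun
    rw [Real.sin_zero, Real.cos_zero]
    have := pb_lt_one (b := b) (L := L) (d := d) ha 0
    have h1 : (0:ℝ) < 1 - pb a b L d 0 := by linarith
    have h2 : (0:ℝ) < L * 1 - d := by linarith
    have : 0 < 180 * b / Real.pi * (1 - pb a b L d 0) * (L * 1 - d) := by positivity
    linarith
  have hHθ1 : Hfun a b L ξL d θ1 < 0 := by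
    unfold Hfun
    have hsinθ1 : 0 < Real.sin θ1 := Real.sin_pos_of_pos_of_lt_pi hθ1pos (by linarith)
    have hz : L * Real.cos θ1 - d = 0 := by
      rw [hcθ1]; field_simp; ring
    rw [hz, mul_zero, add_zero]
    have hξL : ξL * L < 0 := mul_neg_of_neg_of_pos hξ hL
    nlinarith
  -- IVT
  have hivt : (0:ℝ) ∈ Hfun a b L ξL d '' Set.Icc 0 θ1 := by
    apply intermediate_value_Icc' hθ1pos.le (continuous_Hfun (b := b) ha hL hd hdL).continuousOn
    exact ⟨hHθ1.le, hH0.le⟩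
  obtain ⟨θ0, hθ0mem, hθ0⟩ := hivt
  have hθ0pos : 0 < θ0 := by
    rcases eq_or_lt_of_le hθ0mem.1 with h | h
    · exfalso; rw [← h] at hθ0; linarith
    · exact h
  have hθ0lt : θ0 < θ1 := by
    rcases eq_or_lt_of_le hθ0mem.2 with h | h
    · exfalso; rw [h] at hθ0; linarith
    · exact h
  -- sign of Hfun away from θ0
  have hHpos : ∀ x ∈ Set.Ico 0 θ0, 0 < Hfun a b L ξL d x := by
    intro x hx
    have := hHanti ⟨hx.1, by linarith [hx.2]⟩ hθ0mem hx.2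
    rw [hθ0] at this
    exact this
  have hHneg : ∀ x ∈ Set.Ioc θ0 (Real.pi / 2), Hfun a b L ξL d x < 0 := by
    intro x hx
    rcases le_or_gt x θ1 with h | h
    · have := hHanti hθ0mem ⟨by linarith [hx.1, hθ0pos], h⟩ hx.1
      rw [hθ0] at this
      exact this
    · unfold Hfun
      have hsinx : 0 < Real.sin x := Real.sin_pos_of_pos_of_lt_pi (by linarith)
        (by linarith [hx.2])
      have hcx : Real.cos x < d / L := by
        rw [← hcθ1]
        exact Real.strictAntiOn_cos ⟨Real.arccos_nonneg _, Real.arccos_le_pi _⟩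
          ⟨by linarith, by linarith [hx.2]⟩ h
      have hvx : L * Real.cos x - d < 0 := by
        have h5 : Real.cos x * L < d := (lt_div_iff₀ hL).mp hcx
        nlinarith
      have hu : (0:ℝ) < 1 - pb a b L d x := by
        linarith [pb_lt_one (b := b) (L := L) (d := d) ha x]
      have hCpos : 0 < 180 * b / Real.pi := by positivity
      have hξL : ξL * L < 0 := mul_neg_of_neg_of_pos hξ hL
      nlinarith [mul_neg_of_pos_of_neg (mul_pos hCpos hu) hvx,
        mul_neg_of_neg_of_pos hξL hsinx]
  -- f positive
  have hfpos : ∀ x : ℝ, 0 < f a b L ξL d x := by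
    intro x
    unfold f
    exact mul_pos (Real.rpow_pos_of_pos (db_pos hL hd hdL x) _)
      (pb_pos (b := b) (L := L) (d := d) ha x)
  -- f strictly monotone on [0, θ0]
  have hfmono : StrictMonoOn (f a b L ξL d) (Set.Icc 0 θ0) := by
    apply strictMonoOn_of_deriv_pos (convex_Icc _ _)
      (continuous_f (b := b) ha hL hd hdL).continuousOn
    intro x hx
    rw [interior_Icc] at hx
    rw [(hasDerivAt_f (b := b) ha hL hd hdL x).deriv]
    have h1 := hfpos x
    have h2 := db_pos hL hd hdL x
    have h3 := hHpos x ⟨hx.1.le, hx.2⟩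
    have h4 : 0 < d / db L d x ^ 2 := by positivity
    exact mul_pos (mul_pos h1 h4) h3
  -- f strictly antitone on [θ0, π/2]
  have hfanti : StrictAntiOn (f a b L ξL d) (Set.Icc θ0 (Real.pi / 2)) := by
    apply strictAntiOn_of_deriv_neg (convex_Icc _ _)
      (continuous_f (b := b) ha hL hd hdL).continuousOn
    intro x hx
    rw [interior_Icc] at hx
    rw [(hasDerivAt_f (b := b) ha hL hd hdL x).deriv]
    have h1 := hfpos x
    have h2 := db_pos hL hd hdL x
    have h3 := hHneg x ⟨hx.1, hx.2.le⟩
    have h4 : 0 < d / db L d x ^ 2 := by positivity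
    exact mul_neg_of_pos_of_neg (mul_pos h1 h4) h3
  refine ⟨θ0, hθ0mem, ?_, ?_, ?_⟩
  · rw [hEH]; exact hθ0
  · intro θ hθ hθeq
    rw [hEH] at hθeq
    rcases lt_trichotomy θ θ0 with h | h | h
    · exfalso
      have := hHanti hθ hθ0mem h
      rw [hθ0, hθeq] at this
      linarith
    · exact h
    · exfalso
      have := hHanti hθ0mem hθ h
      rw [hθ0, hθeq] at this
      linarith
  · intro θ hθ hne
    rcases lt_or_gt_of_ne hne with h | h
    · exact hfmono ⟨hθ.1, h.le⟩ ⟨hθ0pos.le, le_refl θ0⟩ h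
    · exact hfanti ⟨le_refl θ0, hθ0lt.le.trans hθ1le⟩ ⟨h.le, hθ.2⟩ h
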